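/- For m a positive integer with n = m(m+1)/2, the infinite matrix P whose (k,S)-entry is p(k,S) (rows indexed by k ∈ ℤ_{≥0}, columns by non-empty subsets S of {1,...,m}) has rank exactly n over ℚ. -/

import Mathlib

open Finset Polynomial Module Submodule

/-- `pCount k S` is the number of partitions of `k` all of whose parts lie in `S`. -/
noncomputable def pCount (k : ℕ) (S : Finset ℕ) : ℕ :=
  Nat.card {P : Nat.Partition k // ∀ i ∈ P.parts, i ∈ S}

lemma pCount_zero (S : Finset ℕ) : pCount 0 S = 1 := by
  rw [pCount, Nat.card_eq_one_iff_unique]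
  constructor
  · exact ⟨fun a b => Subtype.ext (Subsingleton.elim _ _)⟩
  · exact ⟨⟨default, by simp⟩⟩

lemma pCount_of_empty {k : ℕ} (hk : k ≠ 0) : pCount k ∅ = 0 := by
  rw [pCount, Nat.card_eq_zero]
  left
  rw [isEmpty_subtype]
  intro P hP
  obtain ⟨i, hi⟩ : ∃ i, i ∈ P.parts := by
    by_contra h
    push_neg at h
    apply hk
    rw [← P.parts_sum, Multiset.eq_zero_of_forall_notMem h, Multiset.sum_zero]
  simpa using hP i hi

/-- partitions of `k+s` with parts in `S` containing the part `s` are in bijection with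
partitions of `k` with parts in `S`. -/
def partWithEquiv (k s : ℕ) (hs : 0 < s) (S : Finset ℕ) (hsS : s ∈ S) :
    {P : Nat.Partition (k + s) // (∀ i ∈ P.parts, i ∈ S) ∧ s ∈ P.parts} ≃
      {P : Nat.Partition k // ∀ i ∈ P.parts, i ∈ S} where
  toFun P := ⟨⟨P.1.parts.erase s,
      fun hi => P.1.parts_pos (Multiset.mem_of_mem_erase hi),
      by
        have h1 := Multiset.sum_erase P.2.2
        have h2 := P.1.parts_sum
        omega⟩,
    fun i hi => P.2.1 i (Multiset.mem_of_mem_erase hi)⟩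
  invFun Q := ⟨⟨s ::ₘ Q.1.parts,
      fun hi => by
        rcases Multiset.mem_cons.1 hi with h | h
        · omega
        · exact Q.1.parts_pos h,
      by
        rw [Multiset.sum_cons, Q.1.parts_sum]
        omega⟩,
    fun i hi => by
      rcases Multiset.mem_cons.1 hi with h | h
      · subst h; exact hsS
      · exact Q.2 i h,
    Multiset.mem_cons_self _ _⟩
  left_inv P := by
    apply Subtype.ext
    apply Nat.Partition.ext
    exact Multiset.cons_erase P.2.2
  right_inv Q := by
    apply Subtype.ext
    apply Nat.Partition.ext
    exact Multiset.erase_cons_head _ _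

lemma pCount_rec (k s : ℕ) (S : Finset ℕ) (hs : 0 < s) (hsS : s ∈ S) :
    pCount (k + s) S = pCount k S + pCount (k + s) (S.erase s) := by
  classical
  rw [pCount,
    Nat.card_congr (Equiv.sumCompl
      (fun P : {P : Nat.Partition (k+s) // ∀ i ∈ P.parts, i ∈ S} => s ∈ P.1.parts)).symm,
    Nat.card_sum]
  congr 1
  · rw [pCount]
    apply Nat.card_congr
    exact ((Equiv.subtypeSubtypeEquivSubtypeInter
      (fun P : Nat.Partition (k+s) => ∀ i ∈ P.parts, i ∈ S) (fun P => s ∈ P.parts)).trans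
      (partWithEquiv k s hs S hsS))
  · rw [pCount]
    apply Nat.card_congr
    refine (Equiv.subtypeSubtypeEquivSubtypeInter
      (fun P : Nat.Partition (k+s) => ∀ i ∈ P.parts, i ∈ S) (fun P => s ∉ P.parts)).trans
      (Equiv.subtypeEquivRight ?_)
    intro P
    constructor
    · rintro ⟨h1, h2⟩ i hi
      exact Finset.mem_erase.2 ⟨fun h => h2 (h ▸ hi), h1 i hi⟩
    · intro h
      exact ⟨fun i hi => Finset.mem_of_mem_erase (h i hi),
        fun hmem => by simpa using (Finset.mem_erase.1 (h s hmem)).1⟩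

lemma pCount_insert_of_lt {k s : ℕ} (h : k < s) (S : Finset ℕ) :
    pCount k (insert s S) = pCount k S := by
  rw [pCount, pCount]
  apply Nat.card_congr
  apply Equiv.subtypeEquivRight
  intro P
  constructor
  · intro hP i hi
    have hle := Multiset.le_sum_of_mem hi
    rw [P.parts_sum] at hle
    rcases Finset.mem_insert.1 (hP i hi) with rfl | hmem
    · omega
    · exact hmem
  · exact fun hP i hi => Finset.mem_insert_of_mem (hP i hi)

noncomputable def pF (S : Finset ℕ) : PowerSeries ℚ := PowerSeries.mk fun k => (pCount k S : ℚ)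
noncomputable def pA (T : Finset ℕ) : ℚ[X] := ∏ j ∈ T, (1 - Polynomial.X ^ j)

lemma pF_empty : pF ∅ = 1 := by
  ext k
  rw [pF, PowerSeries.coeff_mk, PowerSeries.coeff_one]
  rcases eq_or_ne k 0 with rfl | hk
  · simp [pCount_zero]
  · simp [pCount_of_empty hk, hk]

lemma gf_step (s : ℕ) (S : Finset ℕ) (hs : 0 < s) (hsS : s ∉ S) :
    (1 - (PowerSeries.X : PowerSeries ℚ) ^ s) * pF (insert s S) = pF S := by
  ext k
  rw [sub_mul, one_mul, map_sub, mul_comm, PowerSeries.coeff_mul_X_pow']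
  rcases le_or_gt s k with hle | hlt
  · simp only [hle, if_true]
    obtain ⟨k', rfl⟩ : ∃ k', k = k' + s := ⟨k - s, by omega⟩
    rw [pF, pF, PowerSeries.coeff_mk, PowerSeries.coeff_mk, PowerSeries.coeff_mk]
    have := pCount_rec k' s (insert s S) hs (Finset.mem_insert_self s S)
    rw [Finset.erase_insert hsS] at this
    rw [this]
    push_cast
    simp
  · simp only [not_le.2 hlt, if_false, sub_zero]
    rw [pF, pF, PowerSeries.coeff_mk, PowerSeries.coeff_mk, pCount_insert_of_lt hlt]

lemma gf (S : Finset ℕ) (hS : ∀ s ∈ S, 0 < s) : (pA S : PowerSeries ℚ) * pF S = 1 := by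
  classical
  induction S using Finset.induction with
  | empty => simp [pA, pF_empty]
  | @insert s S hsS ih =>
    have hs : 0 < s := hS s (Finset.mem_insert_self s S)
    rw [pA, Finset.prod_insert hsS]
    push_cast
    rw [mul_comm (1 - PowerSeries.X ^ s), mul_assoc, gf_step s S hs hsS]
    exact ih fun t ht => hS t (Finset.mem_insert_of_mem ht)

lemma factor_eq {j : ℕ} : (1 : ℚ[X]) - Polynomial.X ^ j = -(Polynomial.X ^ j - C 1) := by
  rw [map_one]; ring

lemma factor_ne_zero {j : ℕ} (hj : 0 < j) : (1 : ℚ[X]) - Polynomial.X ^ j ≠ 0 := by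
  rw [factor_eq, neg_ne_zero]
  intro h
  have := natDegree_X_pow_sub_C (n := j) (r := (1:ℚ))
  rw [h] at this
  simp at this
  omega

lemma factor_natDegree {j : ℕ} : ((1 : ℚ[X]) - Polynomial.X ^ j).natDegree = j := by
  rw [factor_eq, natDegree_neg, natDegree_X_pow_sub_C]

lemma factor_leadingCoeff {j : ℕ} (hj : 0 < j) :
    ((1 : ℚ[X]) - Polynomial.X ^ j).leadingCoeff = -1 := by
  rw [factor_eq, leadingCoeff_neg, leadingCoeff_X_pow_sub_C hj]

lemma pA_ne_zero {T : Finset ℕ} (hT : ∀ j ∈ T, 0 < j) : pA T ≠ 0 :=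
  prod_ne_zero_iff.2 fun j hj => factor_ne_zero (hT j hj)

lemma pA_natDegree {T : Finset ℕ} (hT : ∀ j ∈ T, 0 < j) : (pA T).natDegree = ∑ j ∈ T, j := by
  rw [pA, natDegree_prod _ _ fun j hj => factor_ne_zero (hT j hj)]
  exact Finset.sum_congr rfl fun j _ => factor_natDegree

lemma pA_leadingCoeff_ne_zero {T : Finset ℕ} (hT : ∀ j ∈ T, 0 < j) :
    (pA T).leadingCoeff ≠ 0 :=
  leadingCoeff_ne_zero.2 (pA_ne_zero hT)

/-- every `d ≤ 1 + 2 + ⋯ + m` is a sum of a subset of `{1,…,m}`. -/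
lemma exists_subset_sum (m : ℕ) : ∀ d ≤ ∑ j ∈ Icc 1 m, j, ∃ T ⊆ Icc 1 m, ∑ j ∈ T, j = d := by
  induction m with
  | zero =>
    intro d hd
    simp only [Icc_self, show Icc 1 0 = ∅ from rfl] at *
    exact ⟨∅, by simp, by simpa using hd.antisymm (Nat.zero_le d) ▸ by simpa using hd⟩
  | succ m ih =>
    intro d hd
    rw [show Icc 1 (m+1) = insert (m+1) (Icc 1 m) by
      ext x; simp only [Finset.mem_Icc, Finset.mem_insert]; omega] at hd ⊢
    rw [Finset.sum_insert (by simp)] at hd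
    rcases le_or_gt d (∑ j ∈ Icc 1 m, j) with h | h
    · obtain ⟨T, hT, hsum⟩ := ih d h
      exact ⟨T, hT.trans (Finset.subset_insert _ _), hsum⟩
    · obtain ⟨T, hT, hsum⟩ := ih (d - (m+1)) (by omega)
      refine ⟨insert (m+1) T, Finset.insert_subset_insert _ hT, ?_⟩
      rw [Finset.sum_insert (fun hmem => by have := Finset.mem_Icc.1 (hT hmem); omega)]
      have hle : ∑ j ∈ Icc 1 m, j ≥ m := by
        rcases Nat.eq_zero_or_pos m with rfl | hm
        · omega
        · calc m = ∑ j ∈ {m}, j := by simp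
            _ ≤ ∑ j ∈ Icc 1 m, j := Finset.sum_le_sum_of_subset (by simp [Finset.singleton_subset_iff]; omega)
      omega

lemma gauss (m : ℕ) : ∑ j ∈ Icc 1 m, j = m * (m + 1) / 2 := by
  have h1 : Finset.range (m+1) = insert 0 (Icc 1 m) := by
    ext x; simp only [Finset.mem_range, Finset.mem_insert, Finset.mem_Icc]; omega
  have h2 := Finset.sum_range_id (m+1)
  rw [h1, Finset.sum_insert (by simp)] at h2
  simpa [Nat.mul_comm] using h2

section
variable (m : ℕ)

local notation "n'" => ∑ j ∈ Icc 1 m, j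

lemma icc_pos : ∀ j ∈ Icc 1 m, 0 < j := fun j hj => by
  have := Finset.mem_Icc.1 hj; omega

lemma sdiff_pos {S : Finset ℕ} : ∀ j ∈ Icc 1 m \ S, 0 < j := fun j hj =>
  icc_pos m j (Finset.mem_sdiff.1 hj).1

lemma polySpan_finrank :
    finrank ℚ (span ℚ (Set.range fun S : {S : Finset ℕ // S.Nonempty ∧ S ⊆ Finset.Icc 1 m} => pA (Icc 1 m \ S.1))) = n' := by
  classical
  have hfd : Module.Finite ℚ (degreeLT ℚ n' : Submodule ℚ ℚ[X]) :=
    Module.Finite.equiv (degreeLTEquiv ℚ n').symm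
  have hdeglt : finrank ℚ (degreeLT ℚ n' : Submodule ℚ ℚ[X]) = n' := by
    rw [LinearEquiv.finrank_eq (degreeLTEquiv ℚ n'), Module.finrank_fin_fun]
  -- upper bound
  have hle : span ℚ (Set.range fun S : {S : Finset ℕ // S.Nonempty ∧ S ⊆ Finset.Icc 1 m} => pA (Icc 1 m \ S.1)) ≤ degreeLT ℚ n' := by
    rw [span_le]
    rintro _ ⟨S, rfl⟩
    rw [SetLike.mem_coe, mem_degreeLT]
    have hne := pA_ne_zero (sdiff_pos m (S := S.1))
    rw [degree_eq_natDegree hne, pA_natDegree (sdiff_pos m (S := S.1))]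
    have hsum : ∑ j ∈ Icc 1 m \ S.1, j + ∑ j ∈ S.1, j = n' := Finset.sum_sdiff S.2.2
    obtain ⟨s, hs⟩ := S.2.1
    have hspos : 0 < s := icc_pos m s (S.2.2 hs)
    have : 0 < ∑ j ∈ S.1, j :=
      lt_of_lt_of_le hspos (Finset.single_le_sum (fun i _ => Nat.zero_le i) hs)
    have hlt : ∑ j ∈ Icc 1 m \ S.1, j < n' := by omega
    exact_mod_cast hlt
  -- the independent family
  have hTd : ∀ d : Fin n', ∃ T ⊆ Icc 1 m, ∑ j ∈ T, j = (d : ℕ) :=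
    fun d => exists_subset_sum m d (le_of_lt d.2)
  choose Td hTd_sub hTd_sum using hTd
  set v : Fin n' → ℚ[X] := fun d => pA (Td d) with hv
  have hTd_pos : ∀ d, ∀ j ∈ Td d, 0 < j := fun d j hj => icc_pos m j (hTd_sub d hj)
  have hdeg : ∀ d, (v d).natDegree = (d : ℕ) := fun d => by
    rw [hv, pA_natDegree (hTd_pos d), hTd_sum d]
  have hlead : ∀ d, (v d).coeff (d : ℕ) ≠ 0 := fun d => by
    rw [← hdeg d, ← leadingCoeff]
    exact leadingCoeff_ne_zero.2 (pA_ne_zero (hTd_pos d))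
  have hli : LinearIndependent ℚ v := by
    rw [Fintype.linearIndependent_iff]
    intro g hg
    by_contra hne
    push_neg at hne
    have hfil : (Finset.univ.filter fun d => g d ≠ 0).Nonempty := by
      obtain ⟨i, hi⟩ := hne
      exact ⟨i, by simp [hi]⟩
    set d₀ := (Finset.univ.filter fun d => g d ≠ 0).max' hfil with hd₀
    have hd₀mem := (Finset.univ.filter fun d => g d ≠ 0).max'_mem hfil
    have hd₀ne : g d₀ ≠ 0 := (Finset.mem_filter.1 hd₀mem).2
    have := congrArg (fun p => Polynomial.coeff p (d₀ : ℕ)) hg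
    simp only [Polynomial.finset_sum_coeff, Polynomial.coeff_smul, smul_eq_mul,
      Polynomial.coeff_zero] at this
    rw [Finset.sum_eq_single d₀] at this
    · exact hd₀ne (by
        have := mul_eq_zero.1 this
        rcases this with h | h
        · exact h
        · exact absurd h (hlead d₀))
    · intro d _ hdne
      rcases eq_or_ne (g d) 0 with h | h
      · rw [h, zero_mul]
      · have hmem : d ∈ Finset.univ.filter fun d => g d ≠ 0 := by simp [h]
        have hlt : d < d₀ := lt_of_le_of_ne (Finset.le_max' _ d hmem) hdne
        rw [Polynomial.coeff_eq_zero_of_natDegree_lt (by rw [hdeg d]; exact_mod_cast hlt),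
          mul_zero]
    · intro h
      exact absurd (Finset.mem_univ d₀) h
  have hsub : Set.range v ⊆ ↑(span ℚ (Set.range fun S : {S : Finset ℕ // S.Nonempty ∧ S ⊆ Finset.Icc 1 m} => pA (Icc 1 m \ S.1))) := by
    rintro _ ⟨d, rfl⟩
    apply subset_span
    have hTne : (Icc 1 m \ Td d).Nonempty := by
      rw [Finset.sdiff_nonempty]
      intro hsub
      have heq : Td d = Icc 1 m := Finset.Subset.antisymm (hTd_sub d) hsub
      have h2 := hTd_sum d
      rw [heq] at h2
      have h3 := d.2
      omega
    refine ⟨⟨Icc 1 m \ Td d, hTne, Finset.sdiff_subset⟩, ?_⟩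
    simp only [hv]
    congr 1
    rw [Finset.sdiff_sdiff_self_left, Finset.inter_eq_right.2 (hTd_sub d)]
  have hfd2 : Module.Finite ℚ (span ℚ (Set.range fun S : {S : Finset ℕ // S.Nonempty ∧ S ⊆ Finset.Icc 1 m} => pA (Icc 1 m \ S.1))) :=
    Submodule.finiteDimensional_of_le hle
  refine le_antisymm ?_ ?_
  · rw [← hdeglt]
    exact Submodule.finrank_mono hle
  · have h1 : finrank ℚ (span ℚ (Set.range v)) = n' := by
      rw [finrank_span_eq_card hli, Fintype.card_fin]
    rw [← h1]
    exact Submodule.finrank_mono (span_le.2 hsub)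

end

lemma finrank_span_rows_eq_cols {ι CT : Type} [Fintype CT] (M : ι → CT → ℚ) :
    finrank ℚ (span ℚ (Set.range M)) =
      finrank ℚ (span ℚ (Set.range fun S : CT => fun k : ι => M k S)) := by
  classical
  set v : CT → (ι → ℚ) := fun S => fun k => M k S with hv
  set Φ : (CT → ℚ) →ₗ[ℚ] (ι → ℚ) := Fintype.linearCombination ℚ v with hΦ
  have hrange : LinearMap.range Φ = span ℚ (Set.range v) := Fintype.range_linearCombination ℚ v
  set R : Submodule ℚ (CT → ℚ) := span ℚ (Set.range M) with hR
  set b := Pi.basisFun ℚ CT with hb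
  have hdot : ∀ w r : CT → ℚ, b.toDual w r = ∑ S, r S * w S := by
    intro w r
    conv_lhs => rw [← b.sum_repr r]
    rw [map_sum]
    refine Finset.sum_congr rfl fun S _ => ?_
    rw [map_smul, smul_eq_mul, Basis.toDual_eq_repr]
    simp [hb]
  have hker : LinearMap.ker Φ = R.dualAnnihilator.comap b.toDualEquiv.toLinearMap := by
    ext w
    rw [LinearMap.mem_ker, Submodule.mem_comap]
    have h1 : Φ w = 0 ↔ ∀ k, ∑ S, M k S * w S = 0 := by
      rw [hΦ, Fintype.linearCombination_apply, funext_iff]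
      refine forall_congr' fun k => ?_
      have : (∑ S, w S • v S) k = ∑ S, M k S * w S := by
        rw [Finset.sum_apply]
        exact Finset.sum_congr rfl fun S _ => by simp [hv, mul_comm]
      rw [this]
      simp
    rw [h1]
    have h2 : b.toDualEquiv.toLinearMap w ∈ R.dualAnnihilator ↔
        ∀ k, (b.toDual w) (M k) = 0 := by
      constructor
      · intro h k
        exact (Submodule.mem_dualAnnihilator _).1 h (M k) (subset_span ⟨k, rfl⟩)
      · intro h
        rw [Submodule.mem_dualAnnihilator]
        intro r hr
        refine LinearMap.mem_ker.1 (span_le.2 ?_ hr)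
        rintro _ ⟨k, rfl⟩
        exact LinearMap.mem_ker.2 (h k)
    rw [h2]
    refine forall_congr' fun k => ?_
    rw [hdot]
  have e1 : finrank ℚ (LinearMap.ker Φ) = finrank ℚ R.dualAnnihilator := by
    rw [hker]
    exact LinearEquiv.finrank_eq (LinearEquiv.ofSubmodule' b.toDualEquiv R.dualAnnihilator)
  have e2 : finrank ℚ R.dualAnnihilator = finrank ℚ ((CT → ℚ) ⧸ R) :=
    (LinearEquiv.finrank_eq (Subspace.quotEquivAnnihilator R)).symm
  have e3 := LinearMap.finrank_range_add_finrank_ker Φ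
  have e4 := Submodule.finrank_quotient_add_finrank R
  rw [hrange] at e3
  omega

/-- `PowerSeries.mk` as a linear map. -/
noncomputable def mkL : (ℕ → ℚ) →ₗ[ℚ] PowerSeries ℚ where
  toFun := PowerSeries.mk
  map_add' u v := by ext k; simp [PowerSeries.coeff_mk]
  map_smul' c u := by ext k; simp [PowerSeries.coeff_mk, PowerSeries.coeff_smul]

lemma mkL_injective : Function.Injective mkL := by
  intro u v h
  funext k
  have := congrArg (PowerSeries.coeff (R := ℚ) k) h
  simpa [mkL, PowerSeries.coeff_mk] using this

/-- coercion `ℚ[X] → ℚ⟦X⟧` as a linear map. -/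
noncomputable def coeL : ℚ[X] →ₗ[ℚ] PowerSeries ℚ where
  toFun p := (p : PowerSeries ℚ)
  map_add' p q := by push_cast; ring
  map_smul' c p := by
    ext k
    simp [Polynomial.coeff_coe, PowerSeries.coeff_smul, Polynomial.coeff_smul]

lemma pA_constantCoeff {T : Finset ℕ} (hT : ∀ j ∈ T, 0 < j) :
    Polynomial.constantCoeff (pA T) = 1 := by
  rw [pA, map_prod]
  rw [Finset.prod_eq_one]
  intro j hj
  rw [map_sub, map_one, map_pow]
  have : Polynomial.constantCoeff (Polynomial.X : ℚ[X]) = 0 := by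
    simp [Polynomial.constantCoeff_apply]
  rw [this, zero_pow (by have := hT j hj; omega), sub_zero]

lemma pA_unit (m : ℕ) : IsUnit ((pA (Icc 1 m) : ℚ[X]) : PowerSeries ℚ) := by
  rw [PowerSeries.isUnit_iff_constantCoeff]
  rw [Polynomial.constantCoeff_coe]
  have : (pA (Icc 1 m)).coeff 0 = Polynomial.constantCoeff (pA (Icc 1 m)) := rfl
  rw [this, pA_constantCoeff (icc_pos m)]
  exact isUnit_one

/-- For a positive integer `m`, with `n = m(m+1)/2`, the infinite matrix
whose rows are indexed by `k ∈ ℕ` and columns by non-empty subsets `S ⊆ {1,...,m}`, with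
`(k,S)`-entry `p(k,S)`, has rank exactly `n` over `ℚ` (i.e. the span of its rows has
dimension `n`). -/
theorem pCount_matrix_rank (m : ℕ) (hm : 0 < m) :
    Module.finrank ℚ
        (Submodule.span ℚ (Set.range fun k : ℕ =>
          fun S : {S : Finset ℕ // S.Nonempty ∧ S ⊆ Finset.Icc 1 m} =>
            (pCount k S.1 : ℚ))) =
      m * (m + 1) / 2 := by
  classical
  have : Finite {S : Finset ℕ // S.Nonempty ∧ S ⊆ Finset.Icc 1 m} := by
    apply Finite.of_injective
      (fun S : {S : Finset ℕ // S.Nonempty ∧ S ⊆ Finset.Icc 1 m} =>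
        (⟨S.1, Finset.mem_powerset.2 S.2.2⟩ : {T // T ∈ (Finset.Icc 1 m).powerset}))
    intro a b h
    rwa [Subtype.mk.injEq, ← Subtype.ext_iff] at h
  have : Fintype {S : Finset ℕ // S.Nonempty ∧ S ⊆ Finset.Icc 1 m} := Fintype.ofFinite _
  rw [finrank_span_rows_eq_cols]
  set CT := {S : Finset ℕ // S.Nonempty ∧ S ⊆ Finset.Icc 1 m}
  set v : CT → (ℕ → ℚ) := fun S => fun k => (pCount k S.1 : ℚ) with hv
  -- transfer via multiplication by pA (Icc 1 m) after mk
  set Θ : (ℕ → ℚ) →ₗ[ℚ] PowerSeries ℚ :=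
    (LinearMap.mulLeft ℚ ((pA (Icc 1 m) : ℚ[X]) : PowerSeries ℚ)).comp mkL with hΘ
  have hΘinj : Function.Injective Θ := by
    intro x y h
    apply mkL_injective
    exact (pA_unit m).mul_left_cancel (by simpa [hΘ, LinearMap.mulLeft_apply] using h)
  have hΘv : ∀ S : CT, Θ (v S) = ((pA (Icc 1 m \ S.1) : ℚ[X]) : PowerSeries ℚ) := by
    intro S
    have hsplit : pA (Icc 1 m \ S.1) * pA S.1 = pA (Icc 1 m) := by
      rw [pA, pA, pA]
      exact Finset.prod_sdiff S.2.2
    have : Θ (v S) = ((pA (Icc 1 m) : ℚ[X]) : PowerSeries ℚ) * pF S.1 := by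
      simp only [hΘ, LinearMap.comp_apply, LinearMap.mulLeft_apply]
      congr 1
    rw [this, ← hsplit]
    push_cast
    rw [mul_assoc, gf S.1 (fun s hs => icc_pos m s (S.2.2 hs)), mul_one]
  have hmap : Submodule.map Θ (span ℚ (Set.range v)) =
      span ℚ (Set.range fun S : CT => ((pA (Icc 1 m \ S.1) : ℚ[X]) : PowerSeries ℚ)) := by
    rw [Submodule.map_span, ← Set.range_comp]
    exact congrArg (span ℚ) (congrArg Set.range (funext fun S => hΘv S))
  have hcoeinj : Function.Injective coeL := fun p q h => Polynomial.coe_injective ℚ h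
  have hmap2 : Submodule.map coeL (span ℚ (Set.range fun S : CT => pA (Icc 1 m \ S.1))) =
      span ℚ (Set.range fun S : CT => ((pA (Icc 1 m \ S.1) : ℚ[X]) : PowerSeries ℚ)) := by
    rw [Submodule.map_span, ← Set.range_comp]
    exact congrArg (span ℚ) (congrArg Set.range (funext fun S => rfl))
  have e1 : finrank ℚ (span ℚ (Set.range v)) =
      finrank ℚ (span ℚ (Set.range fun S : CT =>
        ((pA (Icc 1 m \ S.1) : ℚ[X]) : PowerSeries ℚ))) := by
    rw [← hmap]
    exact LinearEquiv.finrank_eq (Submodule.equivMapOfInjective Θ hΘinj _)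
  have e2 : finrank ℚ (span ℚ (Set.range fun S : CT => pA (Icc 1 m \ S.1))) =
      finrank ℚ (span ℚ (Set.range fun S : CT =>
        ((pA (Icc 1 m \ S.1) : ℚ[X]) : PowerSeries ℚ))) := by
    rw [← hmap2]
    exact LinearEquiv.finrank_eq (Submodule.equivMapOfInjective coeL hcoeinj _)
  rw [show (Set.range fun S : CT => fun k : ℕ => (pCount k S.1 : ℚ)) = Set.range v from rfl]
  rw [e1, ← e2, polySpan_finrank, gauss]
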